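/- Let A be a commutative ring, f ∈ A a non-zero-divisor, Â = lim_n A/(f^n). Then for every A-module M, Tor_1^A(Â, (A_f/A) ⊗_A M) = 0. -/

import Mathlib

open TensorProduct CategoryTheory CategoryTheory.Limits

set_option maxHeartbeats 1000000
set_option synthInstance.maxHeartbeats 400000

namespace Stmt14Aux

variable {A : Type} [CommRing A]

lemma smul_top_eq (f : A) (n : ℕ) :
    (Ideal.span {f} ^ n • ⊤ : Submodule A A) = Ideal.span {f ^ n} := by
  rw [show (Ideal.span {f} ^ n • ⊤ : Submodule A A) = Ideal.span {f} ^ n from by ext x; simp,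
    Ideal.span_singleton_pow]

lemma mem_smul_top_iff (f : A) (n : ℕ) (x : A) :
    x ∈ (Ideal.span {f} ^ n • ⊤ : Submodule A A) ↔ f ^ n ∣ x := by
  rw [smul_top_eq, Ideal.mem_span_singleton]

lemma pow_cancel {f : A} (hf : f ∈ nonZeroDivisors A) (n : ℕ) {u v : A}
    (h : f ^ n * u = f ^ n * v) : u = v :=
  (mul_cancel_left_mem_nonZeroDivisors (pow_mem hf n)).mp h

/-- If the `n`-th component of an element of the `f`-adic completion vanishes, the element
is divisible by `f ^ n`. -/
lemma exists_smul_eq_of_val_zero {f : A} (hf : f ∈ nonZeroDivisors A) (n : ℕ)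
    (x : AdicCompletion (Ideal.span {f}) A) (hx : x.val n = 0) :
    ∃ z : AdicCompletion (Ideal.span {f}) A, f ^ n • z = x := by
  obtain ⟨a, rfl⟩ := AdicCompletion.mk_surjective (Ideal.span {f}) A x
  have hxn : f ^ n ∣ a.val n := by
    rw [← mem_smul_top_iff f n]
    have h0 : (AdicCompletion.mk (Ideal.span {f}) A a).val n
        = Submodule.Quotient.mk (a.val n) := rfl
    rw [h0] at hx
    exact (Submodule.Quotient.mk_eq_zero _).mp hx
  have key : ∀ m, f ^ n ∣ a.val (n + m) := by
    intro m
    have h1 := a.property (Nat.le_add_right n m)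
    rw [SModEq.sub_mem] at h1
    rw [← mem_smul_top_iff f n] at hxn ⊢
    have h2 := Submodule.sub_mem _ hxn h1
    simpa using h2
  choose c hc using key
  have hcau : ∀ m, c m ≡ c (m + 1) [SMOD (Ideal.span {f} ^ m • ⊤ : Submodule A A)] := by
    intro m
    rw [SModEq.sub_mem, mem_smul_top_iff]
    have h1 := a.property (show n + m ≤ n + (m + 1) by omega)
    rw [SModEq.sub_mem, mem_smul_top_iff] at h1
    obtain ⟨d, hd⟩ := h1
    refine ⟨d, pow_cancel hf n ?_⟩
    rw [mul_sub, ← hc m, ← hc (m + 1), hd, ← mul_assoc, ← pow_add]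
  refine ⟨AdicCompletion.mk _ _ (AdicCompletion.AdicCauchySequence.mk (Ideal.span {f}) A c hcau), ?_⟩
  apply AdicCompletion.ext
  intro m
  rw [AdicCompletion.val_smul_apply]
  show f ^ n • (Submodule.Quotient.mk (c m) : A ⧸ (Ideal.span {f} ^ m • ⊤ : Submodule A A)) =
    Submodule.Quotient.mk (a.val m)
  rw [← Submodule.Quotient.mk_smul, Submodule.Quotient.eq]
  have h1 := a.property (Nat.le_add_right m n)
  rw [SModEq.sub_mem] at h1
  have h2 : a.val (n + m) = a.val (m + n) := by rw [Nat.add_comm]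
  have h3 : f ^ n • c m - a.val m = -(a.val m - a.val (m + n)) := by
    rw [smul_eq_mul, ← hc m, h2]; ring
  rw [h3]
  exact Submodule.neg_mem _ h1

lemma eq_zero_of_pow_smul_eq_zero {f : A} (hf : f ∈ nonZeroDivisors A) (n : ℕ)
    (x : AdicCompletion (Ideal.span {f}) A) (hx : f ^ n • x = 0) : x = 0 := by
  obtain ⟨a, rfl⟩ := AdicCompletion.mk_surjective (Ideal.span {f}) A x
  apply AdicCompletion.ext
  intro m
  rw [AdicCompletion.val_zero]
  have h1 : (f ^ n • AdicCompletion.mk (Ideal.span {f}) A a).val (n + m) = 0 := by rw [hx]; rfl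
  rw [AdicCompletion.val_smul] at h1
  have h2 : f ^ n • a.val (n + m) ∈ (Ideal.span {f} ^ (n + m) • ⊤ : Submodule A A) := by
    rw [← Submodule.Quotient.mk_eq_zero, Submodule.Quotient.mk_smul]
    exact h1
  obtain ⟨d, hd⟩ := (mem_smul_top_iff f (n + m) _).mp h2
  rw [smul_eq_mul] at hd
  have h3 : a.val (n + m) = f ^ m * d := pow_cancel hf n (by rw [hd, pow_add, mul_assoc])
  have h4 := a.property (Nat.le_add_left m n)
  rw [SModEq.sub_mem] at h4
  show Submodule.Quotient.mk (a.val m) = 0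
  rw [Submodule.Quotient.mk_eq_zero]
  have h5 : a.val (n + m) ∈ (Ideal.span {f} ^ m • ⊤ : Submodule A A) :=
    (mem_smul_top_iff f m _).mpr ⟨d, h3⟩
  have h6 := Submodule.add_mem _ h4 h5
  simpa using h6

/-- The contraction map `Â ⊗ N → N` for a module `N` killed by `f ^ n`. -/
noncomputable def psi (f : A) (n : ℕ) (N : Type) [AddCommGroup N] [Module A N]
    (hN : ∀ y : N, f ^ n • y = 0) :
    (AdicCompletion (Ideal.span {f}) A ⊗[A] N) →ₗ[A] N :=
  TensorProduct.lift
    ((Submodule.liftQ (Ideal.span {f} ^ n • ⊤ : Submodule A A) (LinearMap.lsmul A N) (by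
        intro x hx
        rw [LinearMap.mem_ker]
        obtain ⟨c, rfl⟩ := (mem_smul_top_iff f n x).mp hx
        ext m
        simp [LinearMap.lsmul_apply, mul_smul, hN])) ∘ₗ
      AdicCompletion.eval (Ideal.span {f}) A n)

lemma psi_tmul (f : A) (n : ℕ) (N : Type) [AddCommGroup N] [Module A N]
    (hN : ∀ y : N, f ^ n • y = 0) (x : AdicCompletion (Ideal.span {f}) A) (m : N) (a : A)
    (ha : x.val n = Submodule.Quotient.mk a) :
    psi f n N hN (x ⊗ₜ[A] m) = a • m := by
  simp only [psi, TensorProduct.lift.tmul, LinearMap.comp_apply]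
  rw [AdicCompletion.eval_apply, ha, Submodule.liftQ_apply, LinearMap.lsmul_apply]

lemma tmul_psi (f : A) (hf : f ∈ nonZeroDivisors A) (n : ℕ) (N : Type) [AddCommGroup N]
    [Module A N] (hN : ∀ y : N, f ^ n • y = 0)
    (w : AdicCompletion (Ideal.span {f}) A ⊗[A] N) :
    (AdicCompletion.of (Ideal.span {f}) A 1) ⊗ₜ[A] (psi f n N hN w) = w := by
  induction w using TensorProduct.induction_on with
  | zero => rw [map_zero, tmul_zero]
  | tmul x m =>
    obtain ⟨a, ha⟩ := Submodule.Quotient.mk_surjective _ (x.val n)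
    rw [psi_tmul f n N hN x m a ha.symm]
    have hval : (x - a • AdicCompletion.of (Ideal.span {f}) A 1).val n = 0 := by
      rw [AdicCompletion.val_sub_apply, AdicCompletion.val_smul_apply]
      have h1 : (AdicCompletion.of (Ideal.span {f}) A 1).val n = Submodule.Quotient.mk 1 := rfl
      have h2 : a • (Submodule.Quotient.mk (1 : A) :
          A ⧸ (Ideal.span {f} ^ n • ⊤ : Submodule A A)) = Submodule.Quotient.mk a := by
        rw [← Submodule.Quotient.mk_smul]
        congr 1
        simp
      rw [h1, h2, ← ha, sub_self]
    obtain ⟨z, hz⟩ := exists_smul_eq_of_val_zero hf n _ hval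
    calc (AdicCompletion.of (Ideal.span {f}) A 1) ⊗ₜ[A] (a • m)
        = (a • AdicCompletion.of (Ideal.span {f}) A 1) ⊗ₜ[A] m := by rw [smul_tmul]
      _ = (a • AdicCompletion.of (Ideal.span {f}) A 1) ⊗ₜ[A] m + z ⊗ₜ[A] (f ^ n • m) := by
          rw [hN m, tmul_zero, add_zero]
      _ = (a • AdicCompletion.of (Ideal.span {f}) A 1) ⊗ₜ[A] m + (f ^ n • z) ⊗ₜ[A] m := by
          congr 1
          exact (smul_tmul _ _ _).symm
      _ = x ⊗ₜ[A] m := by rw [← add_tmul, hz]; congr 1; abel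
  | add u v hu hv => rw [map_add, tmul_add, hu, hv]

lemma psi_natural (f : A) (n : ℕ) (N N' : Type) [AddCommGroup N] [Module A N]
    [AddCommGroup N'] [Module A N'] (hN : ∀ y : N, f ^ n • y = 0)
    (hN' : ∀ y : N', f ^ n • y = 0) (g : N →ₗ[A] N')
    (w : AdicCompletion (Ideal.span {f}) A ⊗[A] N) :
    psi f n N' hN' (LinearMap.lTensor _ g w) = g (psi f n N hN w) := by
  induction w using TensorProduct.induction_on with
  | zero => simp
  | tmul x m =>
    obtain ⟨a, ha⟩ := Submodule.Quotient.mk_surjective _ (x.val n)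
    rw [LinearMap.lTensor_tmul, psi_tmul f n N' hN' x (g m) a ha.symm,
      psi_tmul f n N hN x m a ha.symm, map_smul]
  | add u v hu hv => simp [map_add, hu, hv]

lemma lTensor_injective_of_isTorsion (f : A) (hf : f ∈ nonZeroDivisors A) (n : ℕ)
    (N N' : Type) [AddCommGroup N] [Module A N] [AddCommGroup N'] [Module A N']
    (hN : ∀ y : N, f ^ n • y = 0) (hN' : ∀ y : N', f ^ n • y = 0)
    {g : N →ₗ[A] N'} (hg : Function.Injective g) :
    Function.Injective (LinearMap.lTensor (AdicCompletion (Ideal.span {f}) A) g) := by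
  have h0 : ∀ w, LinearMap.lTensor (AdicCompletion (Ideal.span {f}) A) g w = 0 → w = 0 := by
    intro w hw
    have h1 : g (psi f n N hN w) = g 0 := by
      rw [← psi_natural f n N N' hN hN' g w, hw, map_zero, map_zero]
    rw [← tmul_psi f hf n N hN w, hg h1, tmul_zero]
  intro w₁ w₂ h
  have := h0 (w₁ - w₂) (by rw [map_sub, h, sub_self])
  exact sub_eq_zero.mp this

lemma lTensor_subtype_pi_injective (f : A) (hf : f ∈ nonZeroDivisors A) (n : ℕ)
    (ι : Type) [Fintype ι] (L : Submodule A (ι → A)) (hL : ∀ v, f ^ n • v ∈ L) :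
    Function.Injective (LinearMap.lTensor (AdicCompletion (Ideal.span {f}) A) L.subtype) := by
  classical
  have hsmul : ∀ w : (AdicCompletion (Ideal.span {f}) A) ⊗[A] (ι → A),
      f ^ n • w = 0 → w = 0 := by
    intro w hw
    set Φ := (TensorProduct.piScalarRight A A (AdicCompletion (Ideal.span {f}) A) ι).toLinearMap
      with hΦ
    have hinj : Function.Injective Φ :=
      (TensorProduct.piScalarRight A A (AdicCompletion (Ideal.span {f}) A) ι).injective
    apply hinj
    rw [map_zero]
    have h1 : f ^ n • Φ w = 0 := by rw [← map_smul, hw, map_zero]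
    funext b
    refine eq_zero_of_pow_smul_eq_zero hf n _ ?_
    have h2 := congrFun h1 b
    simpa using h2
  let lam : (ι → A) →ₗ[A] (ι → A) := LinearMap.lsmul A (ι → A) (f ^ n)
  let θ : (ι → A) →ₗ[A] L := LinearMap.codRestrict L lam hL
  have hcond : LinearMap.range θ ≤
      LinearMap.ker (Submodule.mkQ (LinearMap.range lam) ∘ₗ L.subtype) := by
    rintro l ⟨v, rfl⟩
    rw [LinearMap.mem_ker, LinearMap.comp_apply]
    have h1 : (L.subtype) (θ v) = lam v := rfl
    rw [h1, Submodule.mkQ_apply, Submodule.Quotient.mk_eq_zero]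
    exact ⟨v, rfl⟩
  have hqinj : Function.Injective
      (Submodule.liftQ (LinearMap.range θ)
        (Submodule.mkQ (LinearMap.range lam) ∘ₗ L.subtype) hcond) := by
    rw [← LinearMap.ker_eq_bot]
    apply Submodule.ker_liftQ_eq_bot
    intro l hl
    rw [LinearMap.mem_ker, LinearMap.comp_apply, Submodule.mkQ_apply,
      Submodule.Quotient.mk_eq_zero] at hl
    obtain ⟨v, hv⟩ := hl
    exact ⟨v, Subtype.ext hv⟩
  have hN₁ : ∀ y : L ⧸ (LinearMap.range θ), f ^ n • y = 0 := by
    intro y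
    obtain ⟨l, rfl⟩ := Submodule.Quotient.mk_surjective _ y
    rw [← Submodule.Quotient.mk_smul, Submodule.Quotient.mk_eq_zero]
    exact ⟨(l : ι → A), Subtype.ext rfl⟩
  have hN₂ : ∀ y : (ι → A) ⧸ (LinearMap.range lam), f ^ n • y = 0 := by
    intro y
    obtain ⟨v, rfl⟩ := Submodule.Quotient.mk_surjective _ y
    rw [← Submodule.Quotient.mk_smul, Submodule.Quotient.mk_eq_zero]
    exact ⟨v, rfl⟩
  intro u₁ u₂ hu
  suffices h : ∀ u', LinearMap.lTensor (AdicCompletion (Ideal.span {f}) A) L.subtype u' = 0 →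
      u' = 0 by
    have := h (u₁ - u₂) (by rw [map_sub, hu, sub_self])
    exact sub_eq_zero.mp this
  intro u' hu'
  have h1 : LinearMap.lTensor (AdicCompletion (Ideal.span {f}) A)
      (Submodule.mkQ (LinearMap.range θ)) u' = 0 := by
    apply lTensor_injective_of_isTorsion f hf n _ _ hN₁ hN₂ hqinj
    rw [map_zero, ← LinearMap.lTensor_comp_apply, Submodule.liftQ_mkQ,
      LinearMap.lTensor_comp, LinearMap.comp_apply, hu', map_zero]
  have hexact : Function.Exact
      (LinearMap.lTensor (AdicCompletion (Ideal.span {f}) A) θ)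
      (LinearMap.lTensor (AdicCompletion (Ideal.span {f}) A)
        (Submodule.mkQ (LinearMap.range θ))) :=
    lTensor_exact (AdicCompletion (Ideal.span {f}) A)
      (LinearMap.exact_iff.mpr (Submodule.ker_mkQ _)) (Submodule.mkQ_surjective _)
  obtain ⟨w, hw⟩ := (hexact u').mp h1
  have hcomp : ∀ w' : (AdicCompletion (Ideal.span {f}) A) ⊗[A] (ι → A),
      LinearMap.lTensor (AdicCompletion (Ideal.span {f}) A) lam w' = f ^ n • w' := by
    intro w'
    induction w' using TensorProduct.induction_on with
    | zero => simp
    | tmul x v =>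
      rw [LinearMap.lTensor_tmul]
      rw [show lam v = f ^ n • v from rfl, tmul_smul]
    | add u v hu hv => rw [map_add, hu, hv, smul_add]
  have h3 : f ^ n • w = 0 := by
    rw [← hcomp w, show lam = L.subtype ∘ₗ θ from (LinearMap.subtype_comp_codRestrict _ _ _).symm,
      LinearMap.lTensor_comp, LinearMap.comp_apply, hw, hu']
  rw [← hw, hsmul w h3, map_zero]

lemma lTensor_subtype_injective (f : A) (hf : f ∈ nonZeroDivisors A)
    (P : Type) [AddCommGroup P] [Module A P] [Module.Projective A P]
    (K : Submodule A P) (hK : ∀ p : P, ∃ n, f ^ n • p ∈ K) :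
    Function.Injective (LinearMap.lTensor (AdicCompletion (Ideal.span {f}) A) K.subtype) := by
  classical
  intro t₁ t₂ ht
  suffices h : ∀ t, LinearMap.lTensor (AdicCompletion (Ideal.span {f}) A) K.subtype t = 0 →
      t = 0 by
    have := h (t₁ - t₂) (by rw [map_sub, ht, sub_self])
    exact sub_eq_zero.mp this
  intro t ht0
  obtain ⟨T, rfl⟩ := TensorProduct.exists_finset t
  obtain ⟨ν, hν⟩ := Module.projective_def.mp ‹Module.Projective A P›
  have hrel : ∀ b : P, (∑ p ∈ T, (ν (p.2 : P)) b • p.1) = 0 := by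
    intro b
    have h0 := congrArg
      (fun z => (TensorProduct.rid A (AdicCompletion (Ideal.span {f}) A))
        (LinearMap.lTensor (AdicCompletion (Ideal.span {f}) A) ((Finsupp.lapply b) ∘ₗ ν) z)) ht0
    simpa only [map_sum, map_zero, LinearMap.lTensor_tmul, LinearMap.comp_apply,
      Submodule.subtype_apply, Finsupp.lapply_apply, TensorProduct.rid_tmul] using h0
  let nb : P → ℕ := fun b => (hK b).choose
  let B₀ : Finset P := T.sup (fun p => (ν (p.2 : P)).support)
  let n : ℕ := B₀.sup nb
  have hBn : ∀ b : P, b ∈ B₀ → f ^ n • b ∈ K := by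
    intro b hb
    have h1 : nb b ≤ n := Finset.le_sup hb
    have h2 := (hK b).choose_spec
    have h3 : f ^ n • b = f ^ (n - nb b) • (f ^ (nb b) • b) := by
      rw [smul_smul, ← pow_add, Nat.sub_add_cancel h1]
    rw [h3]
    exact K.smul_mem _ h2
  let ι := {b : P // b ∈ B₀}
  let σ : (ι → A) →ₗ[A] P := ∑ b : ι, LinearMap.smulRight (LinearMap.proj b) (b : P)
  have hσ : ∀ v : ι → A, σ v = ∑ b : ι, v b • (b : P) := by
    intro v
    simp [σ, LinearMap.smulRight_apply, LinearMap.proj_apply]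
  have hσK : ∀ v : ι → A, f ^ n • σ v ∈ K := by
    intro v
    rw [hσ, Finset.smul_sum]
    apply Submodule.sum_mem
    intro b _
    rw [smul_comm]
    exact K.smul_mem _ (hBn b b.2)
  let L : Submodule A (ι → A) := Submodule.comap σ K
  have hL : ∀ v : ι → A, f ^ n • v ∈ L := by
    intro v
    rw [Submodule.mem_comap, map_smul]
    exact hσK v
  let vp : AdicCompletion (Ideal.span {f}) A × K → (ι → A) := fun p b => (ν (p.2 : P)) (b : P)
  have hvp : ∀ p : AdicCompletion (Ideal.span {f}) A × K, p ∈ T → σ (vp p) = (p.2 : P) := by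
    intro p hp
    rw [hσ]
    have hsupp : (ν (p.2 : P)).support ⊆ B₀ :=
      Finset.le_sup (f := fun p : AdicCompletion (Ideal.span {f}) A × K => (ν (p.2 : P)).support) hp
    have h1 : (∑ b : ι, vp p b • (b : P)) = ∑ b ∈ B₀, (ν (p.2 : P)) b • b :=
      Finset.sum_coe_sort B₀ (fun b => (ν (p.2 : P)) b • b)
    rw [h1, ← Finset.sum_subset hsupp (fun x _ hx => by
      rw [Finsupp.notMem_support_iff.mp hx, zero_smul])]
    have h2 := hν (p.2 : P)
    rw [Finsupp.linearCombination_apply, Finsupp.sum] at h2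
    simpa using h2
  have hmem : ∀ p : AdicCompletion (Ideal.span {f}) A × K, p ∈ T → vp p ∈ L := by
    intro p hp
    rw [Submodule.mem_comap, hvp p hp]
    exact p.2.2
  let u : AdicCompletion (Ideal.span {f}) A ⊗[A] L :=
    ∑ p ∈ T.attach, p.1.1 ⊗ₜ[A] (⟨vp p.1, hmem p.1 p.2⟩ : L)
  have hlsu : LinearMap.lTensor (AdicCompletion (Ideal.span {f}) A) L.subtype u =
      ∑ p ∈ T.attach, p.1.1 ⊗ₜ[A] vp p.1 := by
    rw [map_sum]
    apply Finset.sum_congr rfl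
    intro p _
    rw [LinearMap.lTensor_tmul]
    rfl
  have hzero : (∑ p ∈ T.attach, p.1.1 ⊗ₜ[A] vp p.1 :
      AdicCompletion (Ideal.span {f}) A ⊗[A] (ι → A)) = 0 := by
    have hinj : Function.Injective
        (TensorProduct.piScalarRight A A (AdicCompletion (Ideal.span {f}) A) ι).toLinearMap :=
      (TensorProduct.piScalarRight A A (AdicCompletion (Ideal.span {f}) A) ι).injective
    apply hinj
    rw [map_zero, map_sum]
    funext b
    rw [Finset.sum_apply]
    have h2 : ∀ p ∈ T.attach,
        ((TensorProduct.piScalarRight A A (AdicCompletion (Ideal.span {f}) A) ι).toLinearMap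
          (p.1.1 ⊗ₜ[A] vp p.1)) b = (ν (p.1.2 : P)) (b : P) • p.1.1 := by
      intro p _
      show ((TensorProduct.piScalarRight A A (AdicCompletion (Ideal.span {f}) A) ι)
          (p.1.1 ⊗ₜ[A] vp p.1)) b = _
      rw [TensorProduct.piScalarRight_apply, TensorProduct.piScalarRightHom_tmul]
    rw [Finset.sum_congr rfl h2, Finset.sum_attach T (fun p => (ν (p.2 : P)) (b : P) • p.1),
      hrel (b : P)]
    rfl
  have hu0 : u = 0 := lTensor_subtype_pi_injective f hf n ι L hL (by
    rw [hlsu, hzero, map_zero])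
  let ρ : L →ₗ[A] K := LinearMap.codRestrict K (σ ∘ₗ L.subtype) (fun l => l.2)
  have ht : (∑ p ∈ T, p.1 ⊗ₜ[A] p.2 : AdicCompletion (Ideal.span {f}) A ⊗[A] K)
      = LinearMap.lTensor (AdicCompletion (Ideal.span {f}) A) ρ u := by
    rw [map_sum, ← Finset.sum_attach T (fun p => p.1 ⊗ₜ[A] p.2)]
    apply Finset.sum_congr rfl
    intro p _
    rw [LinearMap.lTensor_tmul]
    congr 1
    apply Subtype.ext
    exact (hvp p.1 p.2).symm
  rw [ht, hu0, map_zero]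

lemma torsion_loc (f : A) (y : Localization (Submonoid.powers f) ⧸
    LinearMap.range (Algebra.linearMap A (Localization (Submonoid.powers f)))) :
    ∃ n, f ^ n • y = 0 := by
  obtain ⟨q, rfl⟩ := Submodule.Quotient.mk_surjective _ y
  obtain ⟨⟨a, s⟩, hq⟩ := IsLocalization.mk'_surjective (Submonoid.powers f) q
  obtain ⟨n, hn⟩ := (Submonoid.mem_powers_iff (s : A) f).mp s.2
  refine ⟨n, ?_⟩
  rw [← Submodule.Quotient.mk_smul, Submodule.Quotient.mk_eq_zero]
  refine ⟨a, ?_⟩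
  rw [Algebra.linearMap_apply, ← hq, Algebra.smul_def, hn]
  exact (IsLocalization.mk'_spec' _ a s).symm

lemma torsion_tensor (f : A) (M : Type) [AddCommGroup M] [Module A M]
    (y : (Localization (Submonoid.powers f) ⧸
      LinearMap.range (Algebra.linearMap A (Localization (Submonoid.powers f)))) ⊗[A] M) :
    ∃ n, f ^ n • y = 0 := by
  induction y using TensorProduct.induction_on with
  | zero => exact ⟨0, smul_zero _⟩
  | tmul q m =>
    obtain ⟨n, hn⟩ := torsion_loc f q
    exact ⟨n, by rw [smul_tmul', hn, zero_tmul]⟩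
  | add u v hu hv =>
    obtain ⟨nu, hnu⟩ := hu
    obtain ⟨nv, hnv⟩ := hv
    refine ⟨nu + nv, ?_⟩
    have h1 : f ^ (nu + nv) • u = 0 := by
      rw [pow_add, mul_comm, mul_smul, hnu, smul_zero]
    have h2 : f ^ (nu + nv) • v = 0 := by
      rw [pow_add, mul_smul, hnv, smul_zero]
    rw [smul_add, h1, h2, add_zero]

end Stmt14Aux

open Stmt14Aux in
/-- For a non-zero-divisor `f ∈ A`, with `Â = lim A/(fⁿ)` the `f`-adic completion and
`A_f/A` the cokernel of the localization map `A → A_f`, one has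
`Tor₁^A(Â, (A_f/A) ⊗ M) = 0` for every `A`-module `M`. -/
theorem stmt_14 {A : Type} [CommRing A] (f : A) (hf : f ∈ nonZeroDivisors A)
    (M : Type) [AddCommGroup M] [Module A M] :
    IsZero
      (((Tor (ModuleCat.{0} A) 1).obj
          (ModuleCat.of A (AdicCompletion (Ideal.span {f}) A))).obj
        (ModuleCat.of A
          ((Localization (Submonoid.powers f) ⧸
              LinearMap.range
                (Algebra.linearMap A (Localization (Submonoid.powers f)))) ⊗[A] M))) := by
  classical
  let S := AdicCompletion (Ideal.span {f}) A
  let Qbar := Localization (Submonoid.powers f) ⧸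
      LinearMap.range (Algebra.linearMap A (Localization (Submonoid.powers f)))
  let Y : ModuleCat.{0} A := ModuleCat.of A (Qbar ⊗[A] M)
  let F : ModuleCat.{0} A ⥤ ModuleCat.{0} A :=
    (MonoidalCategory.tensoringLeft (ModuleCat.{0} A)).obj (ModuleCat.of A S)
  show IsZero ((F.leftDerived 1).obj Y)
  let Pres : ProjectiveResolution Y := (inferInstance : HasProjectiveResolution Y).out.some
  refine IsZero.of_iso ?_ (Pres.isoLeftDerivedObj F 1)
  let C := (F.mapHomologicalComplex (ComplexShape.down ℕ)).obj Pres.complex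
  show IsZero ((HomologicalComplex.homologyFunctor _ _ 1).obj C)
  erw [← HomologicalComplex.exactAt_iff_isZero_homology]
  rw [HomologicalComplex.exactAt_iff' C 2 1 0 (by simp) (by simp)]
  rw [ShortComplex.moduleCat_exact_iff]
  intro x hx
  let X₂ := Pres.complex.X 2
  let X₁ := Pres.complex.X 1
  let X₀ := Pres.complex.X 0
  let d₂ : X₂ →ₗ[A] X₁ := (Pres.complex.d 2 1).hom
  let d₁ : X₁ →ₗ[A] X₀ := (Pres.complex.d 1 0).hom
  let π₀ : X₀ →ₗ[A] Y := (Pres.π.f 0).hom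
  have hx' : LinearMap.lTensor S d₁ x = 0 := hx
  have hrk : LinearMap.range d₁ = LinearMap.ker π₀ :=
    (ShortComplex.moduleCat_exact_iff_range_eq_ker _).mp Pres.exact₀
  have hrk2 : LinearMap.range d₂ = LinearMap.ker d₁ :=
    (ShortComplex.moduleCat_exact_iff_range_eq_ker _).mp (Pres.exact_succ 0)
  have hproj : Module.Projective A X₀ :=
    ModuleCat.projective_of_module_projective X₀
  have htor : ∀ p : X₀, ∃ n, f ^ n • p ∈ LinearMap.range d₁ := by
    intro p
    obtain ⟨n, hn⟩ := torsion_tensor f M (π₀ p)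
    refine ⟨n, ?_⟩
    rw [hrk, LinearMap.mem_ker, map_smul]
    exact hn
  have hstar := lTensor_subtype_injective f hf X₀ (LinearMap.range d₁) htor
  have hfac : d₁ = (LinearMap.range d₁).subtype ∘ₗ d₁.rangeRestrict :=
    (LinearMap.subtype_comp_codRestrict _ _ _).symm
  have h0 : LinearMap.lTensor S d₁.rangeRestrict x = 0 := by
    apply hstar
    rw [map_zero]
    rw [hfac] at hx'
    exact (LinearMap.lTensor_comp_apply _ _ _ _).symm.trans hx'
  have hexact : Function.Exact (LinearMap.lTensor S d₂)
      (LinearMap.lTensor S d₁.rangeRestrict) :=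
    lTensor_exact S (LinearMap.exact_iff.mpr (by rw [LinearMap.ker_rangeRestrict, ← hrk2]))
      (LinearMap.surjective_rangeRestrict _)
  obtain ⟨y, hy⟩ := (hexact x).mp h0
  exact ⟨y, hy⟩
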